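/- Suppose there exists m ∈ ℕ and δ_m > 0 such that inf_{x∈E} P_x(τ_{K∪L} ≤ m) ≥ δ_m. Then P_x(τ_{K∪L} < ∞) = 1 for all x ∈ E, and the reach-avoid value functions satisfy 0 ≤ w(x;K^c,L) − w_n(x;K^c,L) ≤ (m/δ_m)(1−δ_m)^{⌊n/m⌋} for all x ∈ E and n ∈ ℕ. -/

import Mathlib

open MeasureTheory ProbabilityTheory Filter
open scoped ENNReal

noncomputable section

/-- Trajectory of the Markov process with update map `F` driven by the noise sequence `ξ`,
started at `x`. -/
def traj {E Ξ Ω : Type*} (F : E → Ξ → E) (ξ : ℕ → Ω → Ξ) (x : E) (ω : Ω) : ℕ → E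
  | 0 => x
  | n + 1 => F (traj F ξ x ω n) (ξ n ω)

section Aux

variable {E Ξ Ω : Type*}

/-- deterministic trajectory driven by a noise sequence -/
def dtraj (F : E → Ξ → E) (x : E) (u : ℕ → Ξ) : ℕ → E
  | 0 => x
  | n + 1 => F (dtraj F x u n) (u n)

lemma traj_eq_dtraj (F : E → Ξ → E) (ξ : ℕ → Ω → Ξ) (x : E) (ω : Ω) (n : ℕ) :
    traj F ξ x ω n = dtraj F x (fun i => ξ i ω) n := by
  induction n with
  | zero => rfl
  | succ n ih => simp only [traj, dtraj, ih]

lemma dtraj_congr {F : E → Ξ → E} {x : E} {u u' : ℕ → Ξ} {n : ℕ}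
    (h : ∀ i < n, u i = u' i) : dtraj F x u n = dtraj F x u' n := by
  induction n with
  | zero => rfl
  | succ n ih =>
    simp only [dtraj]
    rw [ih (fun i hi => h i (Nat.lt_succ_of_lt hi)), h n (Nat.lt_succ_self n)]

lemma dtraj_add (F : E → Ξ → E) (x : E) (u : ℕ → Ξ) (N k : ℕ) :
    dtraj F x u (N + k) = dtraj F (dtraj F x u N) (fun i => u (N + i)) k := by
  induction k with
  | zero => rfl
  | succ k ih =>
    show dtraj F x u ((N + k) + 1) = _
    simp only [dtraj, ih]

lemma measurable_dtraj [MeasurableSpace E] [MeasurableSpace Ξ] {F : E → Ξ → E}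
    (hF : Measurable (Function.uncurry F)) (n : ℕ) :
    Measurable (fun p : E × (ℕ → Ξ) => dtraj F p.1 p.2 n) := by
  induction n with
  | zero => exact measurable_fst
  | succ n ih =>
    exact hF.comp (ih.prodMk ((measurable_pi_apply n).comp measurable_snd))

/-- extend a finite tuple to a sequence by a default value -/
def extTup (d : Ξ) {r : ℕ} (v : Fin r → Ξ) (n : ℕ) : Ξ :=
  if h : n < r then v ⟨n, h⟩ else d

lemma measurable_extTup [MeasurableSpace Ξ] (d : Ξ) (r : ℕ) :
    Measurable (fun v : Fin r → Ξ => extTup d v) := by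
  apply measurable_pi_lambda
  intro n
  unfold extTup
  split_ifs with h
  · exact measurable_pi_apply _
  · exact measurable_const

lemma tuple_law [MeasurableSpace Ξ] [MeasurableSpace Ω] (μ : Measure Ω) [IsProbabilityMeasure μ]
    (ξ : ℕ → Ω → Ξ) (hξmeas : ∀ n, Measurable (ξ n))
    (hξindep : iIndepFun ξ μ)
    (hξid : ∀ n, IdentDistrib (ξ n) (ξ 0) μ μ)
    (r : ℕ) (e : Fin r → ℕ) (he : Function.Injective e) :
    μ.map (fun ω (i : Fin r) => ξ (e i) ω) = Measure.pi (fun _ => μ.map (ξ 0)) := by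
  classical
  have hνp : IsProbabilityMeasure (μ.map (ξ 0)) :=
    Measure.isProbabilityMeasure_map (hξmeas 0).aemeasurable
  refine (Measure.pi_eq fun s hs => ?_).symm
  rw [Measure.map_apply (measurable_pi_lambda _ fun i => hξmeas (e i))
    (MeasurableSet.univ_pi hs)]
  set sets : ℕ → Set Ξ := fun n => if h : ∃ i, e i = n then s h.choose else Set.univ with hsets
  have hsetse : ∀ i : Fin r, sets (e i) = s i := by
    intro i
    have hex : ∃ j, e j = e i := ⟨i, rfl⟩
    simp only [hsets, dif_pos hex]
    have : hex.choose = i := he hex.choose_spec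
    rw [this]
  have hmeas : ∀ n, n ∈ Finset.image e Finset.univ → MeasurableSet (sets n) := by
    intro n hn
    simp only [hsets]
    split_ifs with h
    · exact hs _
    · exact MeasurableSet.univ
  have key := hξindep.measure_inter_preimage_eq_mul (Finset.image e Finset.univ) hmeas
  have h1 : ((fun ω (i : Fin r) => ξ (e i) ω) ⁻¹' Set.pi Set.univ s)
      = ⋂ n ∈ Finset.image e Finset.univ, ξ n ⁻¹' sets n := by
    ext ω
    simp only [Set.mem_preimage, Set.mem_pi, Set.mem_univ, true_implies, Set.mem_iInter,
      Finset.mem_image, Finset.mem_univ, true_and]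
    constructor
    · rintro h n ⟨i, rfl⟩
      rw [hsetse i]; exact h i
    · intro h i
      rw [← hsetse i]; exact h (e i) ⟨i, rfl⟩
  rw [h1, key, Finset.prod_image (fun i _ j _ hij => he hij)]
  refine Finset.prod_congr rfl fun i _ => ?_
  rw [hsetse i, ← Measure.map_apply (hξmeas (e i)) (hs i), (hξid (e i)).map_eq]

end Aux

/-- if for some `m` and `δ > 0` one has `inf_x P_x(τ_{K∪L} ≤ m) ≥ δ`, then
`P_x(τ_{K∪L} < ∞) = 1` for all `x`, and
`0 ≤ w x - w_n x ≤ (m/δ)(1-δ)^⌊n/m⌋` for all `x` and `n`. -/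
theorem stmt_7
    {E Ξ Ω : Type*} [MeasurableSpace E] [StandardBorelSpace E]
    [MeasurableSpace Ξ] [MeasurableSpace Ω]
    (μ : Measure Ω) [IsProbabilityMeasure μ]
    (ξ : ℕ → Ω → Ξ) (hξmeas : ∀ n, Measurable (ξ n))
    (hξindep : iIndepFun ξ μ)
    (hξid : ∀ n, IdentDistrib (ξ n) (ξ 0) μ μ)
    (F : E → Ξ → E) (hF : Measurable (Function.uncurry F))
    (K L : Set E) (hK : MeasurableSet K) (hL : MeasurableSet L)
    -- the finite-horizon reach-avoid probabilities `w_n x = P_x(τ_L < τ_K, τ_L ≤ n)`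
    (wn : ℕ → E → ℝ)
    (hwn : ∀ n x, wn n x = (μ {ω | ∃ k ≤ n, traj F ξ x ω k ∈ L ∧
      ∀ j < k, traj F ξ x ω j ∈ Kᶜ}).toReal)
    -- the reach-avoid probability `w x = P_x(τ_L < τ_K, τ_L < ∞)`
    (w : E → ℝ)
    (hw : ∀ x, w x = (μ {ω | ∃ k, traj F ξ x ω k ∈ L ∧
      ∀ j < k, traj F ξ x ω j ∈ Kᶜ}).toReal)
    (m : ℕ) (δ : ℝ) (hδ : 0 < δ)
    (hm : ∀ x, δ ≤ (μ {ω | ∃ k ≤ m, traj F ξ x ω k ∈ K ∪ L}).toReal) :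
    (∀ x, μ {ω | ∃ k, traj F ξ x ω k ∈ K ∪ L} = 1) ∧
      ∀ x n, 0 ≤ w x - wn n x ∧
        w x - wn n x ≤ (m / δ) * (1 - δ) ^ (n / m) := by
  classical
  rcases isEmpty_or_nonempty E with hE | ⟨⟨x₀⟩⟩
  · exact ⟨fun x => (hE.false x).elim, fun x => (hE.false x).elim⟩
  obtain ⟨ω₀⟩ : Nonempty Ω := by
    by_contra h
    rw [not_nonempty_iff] at h
    have h1 : μ Set.univ = 1 := measure_univ
    rw [Set.univ_eq_empty_iff.mpr h] at h1
    simp at h1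
  set d : Ξ := ξ 0 ω₀ with hd
  set c : ℝ≥0∞ := ENNReal.ofReal (1 - δ) with hc
  -- survival sets
  set T : E → ℕ → Set Ω :=
    fun x n => {ω | ∀ k ≤ n, dtraj F x (fun i => ξ i ω) k ∉ K ∪ L} with hT
  have hKLc : MeasurableSet (K ∪ L) := hK.union hL
  have htrajmeas : ∀ (x : E) (k : ℕ), Measurable (fun ω => dtraj F x (fun i => ξ i ω) k) := by
    intro x k
    exact (measurable_dtraj hF k).comp (measurable_const.prodMk (measurable_pi_lambda _ hξmeas))
  have hTmeas : ∀ x n, MeasurableSet (T x n) := by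
    intro x n
    have hEq : T x n = ⋂ k ∈ Set.Iic n, (fun ω => dtraj F x (fun i => ξ i ω) k) ⁻¹' (K ∪ L)ᶜ := by
      ext ω; simp [hT]
    rw [hEq]
    exact MeasurableSet.biInter (Set.to_countable _) fun k _ => (htrajmeas x k) hKLc.compl
  have hTmono : ∀ x {a b : ℕ}, a ≤ b → T x b ⊆ T x a := by
    intro x a b hab ω hω k hk
    exact hω k (hk.trans hab)
  -- δ ≤ 1
  have hδ1 : δ ≤ 1 := by
    refine (hm x₀).trans ?_
    have h1 : μ {ω | ∃ k ≤ m, traj F ξ x₀ ω k ∈ K ∪ L} ≤ 1 := prob_le_one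
    calc (μ {ω | ∃ k ≤ m, traj F ξ x₀ ω k ∈ K ∪ L}).toReal
        ≤ (1 : ℝ≥0∞).toReal := ENNReal.toReal_mono ENNReal.one_ne_top h1
      _ = 1 := by simp
  -- key one-step bound: from any state, survival for m more steps has probability ≤ 1 - δ
  have hstep : ∀ y : E, μ (T y m) ≤ c := by
    intro y
    set H : Set Ω := {ω | ∃ k ≤ m, dtraj F y (fun i => ξ i ω) k ∈ K ∪ L} with hH
    have hHmeas : MeasurableSet H := by
      have hEq : H = ⋃ k ∈ Set.Iic m, (fun ω => dtraj F y (fun i => ξ i ω) k) ⁻¹' (K ∪ L) := by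
        ext ω; simp [hH]
      rw [hEq]
      exact MeasurableSet.biUnion (Set.to_countable _) fun k _ => (htrajmeas y k) hKLc
    have hTc : T y m = Hᶜ := by
      ext ω
      simp only [hT, hH, Set.mem_setOf_eq, Set.mem_compl_iff, not_exists, not_and]
    have hδH : ENNReal.ofReal δ ≤ μ H := by
      have h2 := hm y
      simp only [traj_eq_dtraj] at h2
      calc ENNReal.ofReal δ ≤ ENNReal.ofReal ((μ H).toReal) := ENNReal.ofReal_le_ofReal h2
        _ = μ H := ENNReal.ofReal_toReal (measure_ne_top μ H)
    rw [hTc, prob_compl_eq_one_sub hHmeas, hc]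
    calc 1 - μ H ≤ 1 - ENNReal.ofReal δ := tsub_le_tsub_left hδH 1
      _ = ENNReal.ofReal 1 - ENNReal.ofReal δ := by rw [ENNReal.ofReal_one]
      _ = ENNReal.ofReal (1 - δ) := (ENNReal.ofReal_sub 1 hδ.le).symm
  -- contraction step
  have hcontr : ∀ (x : E) (N : ℕ), μ (T x (N + m)) ≤ c * μ (T x N) := by
    intro x N
    set V : Ω → (Fin N → Ξ) := fun ω i => ξ i ω with hV
    set U : Ω → (Fin m → Ξ) := fun ω i => ξ (N + i) ω with hU
    have hVmeas : Measurable V := measurable_pi_lambda _ fun i => hξmeas i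
    have hUmeas : Measurable U := measurable_pi_lambda _ fun i => hξmeas (N + i)
    set A : Set (Fin N → Ξ) := {v | ∀ k ≤ N, dtraj F x (extTup d v) k ∉ K ∪ L} with hA
    set g : (Fin N → Ξ) → E := fun v => dtraj F x (extTup d v) N with hg
    set C : Set (E × (Fin m → Ξ)) := {p | ∀ k ≤ m, dtraj F p.1 (extTup d p.2) k ∉ K ∪ L} with hC
    have hgmeas : Measurable g :=
      (measurable_dtraj hF N).comp (measurable_const.prodMk (measurable_extTup d N))
    have hAmeas : MeasurableSet A := by
      have hEq : A = ⋂ k ∈ Set.Iic N,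
          (fun v : Fin N → Ξ => dtraj F x (extTup d v) k) ⁻¹' (K ∪ L)ᶜ := by
        ext v; simp [hA]
      rw [hEq]
      exact MeasurableSet.biInter (Set.to_countable _) fun k _ =>
        ((measurable_dtraj hF k).comp (measurable_const.prodMk (measurable_extTup d N))) hKLc.compl
    have hCmeas : MeasurableSet C := by
      have hEq : C = ⋂ k ∈ Set.Iic m,
          (fun p : E × (Fin m → Ξ) => dtraj F p.1 (extTup d p.2) k) ⁻¹' (K ∪ L)ᶜ := by
        ext p; simp [hC]
      rw [hEq]
      exact MeasurableSet.biInter (Set.to_countable _) fun k _ =>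
        ((measurable_dtraj hF k).comp
          (measurable_fst.prodMk ((measurable_extTup d m).comp measurable_snd))) hKLc.compl
    -- trajectory identifications
    have hVA : ∀ (ω : Ω) (k : ℕ), k ≤ N →
        dtraj F x (extTup d (V ω)) k = dtraj F x (fun i => ξ i ω) k := by
      intro ω k hk
      refine dtraj_congr fun i hi => ?_
      have hiN : i < N := lt_of_lt_of_le hi hk
      simp only [extTup, dif_pos hiN]; rfl
    have hshift : ∀ (ω : Ω) (k : ℕ), k ≤ m →
        dtraj F (g (V ω)) (extTup d (U ω)) k = dtraj F x (fun i => ξ i ω) (N + k) := by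
      intro ω k hk
      have h2 : g (V ω) = dtraj F x (fun i => ξ i ω) N := hVA ω N le_rfl
      rw [h2, dtraj_add F x (fun i => ξ i ω) N k]
      refine dtraj_congr fun i hi => ?_
      have him : i < m := lt_of_lt_of_le hi hk
      simp only [extTup, dif_pos him]; rfl
    set S' : Set ((Fin N → Ξ) × (Fin m → Ξ)) := {p | p.1 ∈ A ∧ (g p.1, p.2) ∈ C} with hS'
    have hS'meas : MeasurableSet S' :=
      (hAmeas.preimage measurable_fst).inter
        (hCmeas.preimage ((hgmeas.comp measurable_fst).prodMk measurable_snd))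
    have hsplit : (fun ω => (V ω, U ω)) ⁻¹' S' = T x (N + m) := by
      ext ω
      simp only [Set.mem_preimage, hS', Set.mem_setOf_eq, hA, hC, hT]
      constructor
      · rintro ⟨h1, h2⟩ k hk
        rcases le_or_gt k N with hkN | hkN
        · rw [← hVA ω k hkN]; exact h1 k hkN
        · have hk' : k - N ≤ m := by omega
          have : N + (k - N) = k := by omega
          rw [← this, ← hshift ω (k - N) hk']
          exact h2 (k - N) hk'
      · intro h
        refine ⟨fun k hk => by rw [hVA ω k hk]; exact h k (hk.trans (Nat.le_add_right N m)),
          fun k hk => ?_⟩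
        rw [hshift ω k hk]
        exact h (N + k) (by omega)
    have hVT : V ⁻¹' A = T x N := by
      ext ω
      simp only [Set.mem_preimage, hA, Set.mem_setOf_eq, hT]
      constructor
      · intro h k hk; rw [← hVA ω k hk]; exact h k hk
      · intro h k hk; rw [hVA ω k hk]; exact h k hk
    -- independence
    have hVU : IndepFun V U μ := by
      have hdisj : Disjoint (Finset.range N) (Finset.Ico N (N + m)) := by
        simp only [Finset.disjoint_left, Finset.mem_range, Finset.mem_Ico]
        omega
      have hind := hξindep.indepFun_finset (Finset.range N) (Finset.Ico N (N + m)) hdisj hξmeas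
      have hφ : Measurable (fun f : (i : (Finset.range N : Finset ℕ)) → Ξ =>
          (fun i : Fin N => f ⟨i, Finset.mem_range.mpr i.isLt⟩)) :=
        measurable_pi_lambda _ fun i => measurable_pi_apply _
      have hψ : Measurable (fun f : (i : (Finset.Ico N (N + m) : Finset ℕ)) → Ξ =>
          (fun i : Fin m => f ⟨N + i, Finset.mem_Ico.mpr ⟨Nat.le_add_right N i,
            Nat.add_lt_add_left i.isLt N⟩⟩)) :=
        measurable_pi_lambda _ fun i => measurable_pi_apply _
      exact hind.comp hφ hψ
    haveI : IsProbabilityMeasure (μ.map V) := Measure.isProbabilityMeasure_map hVmeas.aemeasurable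
    haveI : IsProbabilityMeasure (μ.map U) := Measure.isProbabilityMeasure_map hUmeas.aemeasurable
    -- per-slice bound
    have hUlaw : μ.map U = μ.map (fun ω (i : Fin m) => ξ (i : ℕ) ω) := by
      rw [tuple_law μ ξ hξmeas hξindep hξid m (fun i => N + (i : ℕ))
          (fun i j hij => Fin.ext (Nat.add_left_cancel hij)),
        tuple_law μ ξ hξmeas hξindep hξid m (fun i => (i : ℕ)) Fin.val_injective]
    have hslice : ∀ y : E, (μ.map U) {u | (y, u) ∈ C} ≤ c := by
      intro y
      have hCy : MeasurableSet {u : Fin m → Ξ | (y, u) ∈ C} :=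
        hCmeas.preimage (measurable_const.prodMk measurable_id)
      rw [hUlaw, Measure.map_apply (measurable_pi_lambda _ fun i => hξmeas _) hCy]
      have hEq : (fun ω (i : Fin m) => ξ (i : ℕ) ω) ⁻¹' {u | (y, u) ∈ C} = T y m := by
        ext ω
        simp only [Set.mem_preimage, Set.mem_setOf_eq, hC, hT]
        have harg : ∀ k ≤ m, dtraj F y (extTup d (fun i : Fin m => ξ (i : ℕ) ω)) k
            = dtraj F y (fun i => ξ i ω) k := by
          intro k hk
          refine dtraj_congr fun i hi => ?_
          have him : i < m := lt_of_lt_of_le hi hk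
          simp only [extTup, dif_pos him]
        constructor
        · intro h k hk; rw [← harg k hk]; exact h k hk
        · intro h k hk; rw [harg k hk]; exact h k hk
      rw [hEq]
      exact hstep y
    -- put it together
    have hmain : μ (T x (N + m)) = ((μ.map V).prod (μ.map U)) S' := by
      rw [← hsplit, ← Measure.map_apply (hVmeas.prodMk hUmeas) hS'meas,
        ← (indepFun_iff_map_prod_eq_prod_map_map hVmeas.aemeasurable hUmeas.aemeasurable).mp hVU]
    rw [hmain, Measure.prod_apply hS'meas]
    have hbound : ∀ v : Fin N → Ξ, (μ.map U) (Prod.mk v ⁻¹' S') ≤ A.indicator (fun _ => c) v := by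
      intro v
      by_cases hv : v ∈ A
      · rw [Set.indicator_of_mem hv]
        refine le_trans (measure_mono ?_) (hslice (g v))
        intro u hu
        exact hu.2
      · rw [Set.indicator_of_notMem hv]
        have hempty : Prod.mk v ⁻¹' S' = ∅ := by
          ext u
          simp only [Set.mem_preimage, hS', Set.mem_setOf_eq, Set.mem_empty_iff_false, iff_false]
          exact fun hu => hv hu.1
        simp [hempty]
    calc ∫⁻ v, (μ.map U) (Prod.mk v ⁻¹' S') ∂(μ.map V)
        ≤ ∫⁻ v, A.indicator (fun _ => c) v ∂(μ.map V) := lintegral_mono hbound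
      _ = c * (μ.map V) A := lintegral_indicator_const hAmeas c
      _ = c * μ (T x N) := by rw [Measure.map_apply hVmeas hAmeas, hVT]
  -- geometric decay
  have hgeom : ∀ (x : E) (j : ℕ), μ (T x (j * m)) ≤ c ^ j := by
    intro x j
    induction j with
    | zero => simpa using prob_le_one
    | succ j ih =>
      have h1 : (j + 1) * m = j * m + m := by ring
      rw [h1, pow_succ, mul_comm (c ^ j) c]
      exact (hcontr x (j * m)).trans (mul_le_mul_right ih c)
  have hc1 : c < 1 := by
    rw [hc, ← ENNReal.ofReal_one]
    exact ENNReal.ofReal_lt_ofReal_iff_of_nonneg (by linarith) |>.mpr (by linarith)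
  have htends : Tendsto (fun j : ℕ => c ^ j) atTop (nhds 0) :=
    ENNReal.tendsto_pow_atTop_nhds_zero_of_lt_one hc1
  -- a set contained in all T x (j*m) has measure zero
  have hzero : ∀ (x : E) (S : Set Ω), (∀ j : ℕ, S ⊆ T x (j * m)) → μ S = 0 := by
    intro x S hS
    have hle : ∀ j : ℕ, μ S ≤ c ^ j := fun j => (measure_mono (hS j)).trans (hgeom x j)
    have := ge_of_tendsto' htends hle
    exact le_antisymm this zero_le
  constructor
  · -- claim 1
    intro x
    simp only [traj_eq_dtraj]
    set Sall : Set Ω := {ω | ∃ k, dtraj F x (fun i => ξ i ω) k ∈ K ∪ L} with hSall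
    have hSallmeas : MeasurableSet Sall := by
      have hEq : Sall = ⋃ k, (fun ω => dtraj F x (fun i => ξ i ω) k) ⁻¹' (K ∪ L) := by
        ext ω; simp [hSall]
      rw [hEq]
      exact MeasurableSet.iUnion fun k => (htrajmeas x k) hKLc
    have hcompl : μ Sallᶜ = 0 := by
      refine hzero x Sallᶜ fun j => ?_
      intro ω hω k _
      simp only [hSall, Set.mem_compl_iff, Set.mem_setOf_eq, not_exists] at hω
      exact hω k
    exact (prob_compl_eq_zero_iff hSallmeas).mp hcompl
  · -- claim 2
    intro x n
    set Wn : Set Ω := {ω | ∃ k ≤ n, dtraj F x (fun i => ξ i ω) k ∈ L ∧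
        ∀ j < k, dtraj F x (fun i => ξ i ω) j ∈ Kᶜ} with hWn
    set W : Set Ω := {ω | ∃ k, dtraj F x (fun i => ξ i ω) k ∈ L ∧
        ∀ j < k, dtraj F x (fun i => ξ i ω) j ∈ Kᶜ} with hW
    have hwx : w x = (μ W).toReal := by rw [hw]; simp only [traj_eq_dtraj]; rfl
    have hwnx : wn n x = (μ Wn).toReal := by rw [hwn]; simp only [traj_eq_dtraj]; rfl
    have hsub1 : Wn ⊆ W := by
      rintro ω ⟨k, _, hkL, hkK⟩
      exact ⟨k, hkL, hkK⟩
    have hsub2 : W ⊆ Wn ∪ T x n := by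
      rintro ω ⟨k, hkL, hkK⟩
      by_cases hex : ω ∈ Wn
      · exact Or.inl hex
      · refine Or.inr fun k' hk' => ?_
        have hkn : n < k := by
          by_contra hle
          push_neg at hle
          exact hex ⟨k, hle, hkL, hkK⟩
        have hk'k : k' < k := lt_of_le_of_lt hk' hkn
        intro hmem
        rcases hmem with hmemK | hmemL
        · exact hkK k' hk'k hmemK
        · exact hex ⟨k', hk', hmemL, fun j hj => hkK j (hj.trans hk'k)⟩
    constructor
    · rw [hwx, hwnx, sub_nonneg]
      exact ENNReal.toReal_mono (measure_ne_top μ W) (measure_mono hsub1)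
    · have hWle : (μ W).toReal ≤ (μ Wn).toReal + (μ (T x n)).toReal := by
        have h1 : μ W ≤ μ Wn + μ (T x n) :=
          (measure_mono hsub2).trans (measure_union_le _ _)
        have h2 : μ Wn + μ (T x n) ≠ ⊤ :=
          ENNReal.add_ne_top.mpr ⟨measure_ne_top μ _, measure_ne_top μ _⟩
        calc (μ W).toReal ≤ (μ Wn + μ (T x n)).toReal := ENNReal.toReal_mono h2 h1
          _ = (μ Wn).toReal + (μ (T x n)).toReal :=
            ENNReal.toReal_add (measure_ne_top μ _) (measure_ne_top μ _)
      have hdiff : w x - wn n x ≤ (μ (T x n)).toReal := by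
        rw [hwx, hwnx]; linarith
      rcases Nat.eq_zero_or_pos m with hm0 | hm1
      · -- m = 0 : survival sets are null
        have hTn0 : μ (T x n) = 0 := by
          refine hzero x (T x n) fun j => ?_
          rw [hm0, Nat.mul_zero]
          exact hTmono x (Nat.zero_le n)
        rw [hm0]
        simp only [Nat.cast_zero, zero_div, zero_mul]
        rw [hTn0] at hdiff
        simpa using hdiff
      · -- m ≥ 1
        have hTle : μ (T x n) ≤ c ^ (n / m) := by
          have h1 : m * (n / m) ≤ n := Nat.mul_div_le n m
          refine le_trans (measure_mono (hTmono x h1)) ?_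
          rw [mul_comm]
          exact hgeom x (n / m)
        have h2 : (μ (T x n)).toReal ≤ (1 - δ) ^ (n / m) := by
          have hcpow : c ^ (n / m) = ENNReal.ofReal ((1 - δ) ^ (n / m)) := by
            rw [hc, ← ENNReal.ofReal_pow (by linarith)]
          calc (μ (T x n)).toReal ≤ (c ^ (n / m)).toReal :=
              ENNReal.toReal_mono (by rw [hcpow]; exact ENNReal.ofReal_ne_top) hTle
            _ = (1 - δ) ^ (n / m) := by
              rw [hcpow, ENNReal.toReal_ofReal (pow_nonneg (by linarith) _)]
        have h3 : (1 : ℝ) ≤ (m : ℝ) / δ := by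
          rw [le_div_iff₀ hδ, one_mul]
          calc δ ≤ 1 := hδ1
            _ ≤ (m : ℝ) := by exact_mod_cast hm1
        calc w x - wn n x ≤ (1 - δ) ^ (n / m) := hdiff.trans h2
          _ ≤ (m / δ) * (1 - δ) ^ (n / m) :=
            le_mul_of_one_le_left (pow_nonneg (by linarith) _) h3
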